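/- Let (X,μ) be a σ-finite measure space and f ∈ L¹(X,μ)⁺ with support of full measure restriction. Then there exists a doubly stochastic operator T from (supp f, μ) to the interval [0, μ(supp f)) with Lebesgue measure such that T(f) = f↓ and T*(f↓) = f, where T* is the dual operator. -/

import Mathlib

set_option maxHeartbeats 1000000


open MeasureTheory Set Filter Topology
open scoped ENNReal

/-- The distribution function `D_f(t) = μ{x : f x > t}`. -/
noncomputable def distFun {X : Type*} [MeasurableSpace X] (μ : Measure X)
    (f : X → ℝ≥0∞) (t : ℝ≥0∞) : ℝ≥0∞ := μ {x | t < f x}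

/-- The decreasing rearrangement `f↓(r) = inf {t > 0 : D_f(t) ≤ r}`. -/
noncomputable def decRearr {X : Type*} [MeasurableSpace X] (μ : Measure X)
    (f : X → ℝ≥0∞) (r : ℝ) : ℝ≥0∞ :=
  sInf {t : ℝ≥0∞ | 0 < t ∧ distFun μ f t ≤ ENNReal.ofReal r}

/-- comap σ-algebra, as a plain definition so that it is never a local instance. -/
abbrev mco {α β : Type*} [mβ : MeasurableSpace β] (f : α → β) : MeasurableSpace α :=
  MeasurableSpace.comap f mβ


/-- A simple function measurable w.r.t. a comap σ-algebra factors through the map. -/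
lemma simpleFunc_comap_factor {α β : Type*} [mβ : MeasurableSpace β] {f : α → β}
    (u : @SimpleFunc α (mβ.comap f) ℝ) :
    ∃ k : β → ℝ, Measurable k ∧ ∀ x, u x = k (f x) := by
  letI : MeasurableSpace α := mβ.comap f
  induction u using SimpleFunc.induction with
  | @const c s hs =>
    obtain ⟨B, hB, rfl⟩ := hs
    refine ⟨B.indicator fun _ => c, measurable_const.indicator hB, fun x => ?_⟩
    simp only [SimpleFunc.coe_piecewise, SimpleFunc.coe_const, Set.piecewise,
      Set.indicator, SimpleFunc.coe_zero]
    classical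
    show Set.piecewise (f ⁻¹' B) (fun _ => c) (fun _ => 0) x = _
    by_cases hx : f x ∈ B <;> simp [hx, Set.mem_preimage, Set.piecewise]
  | @add u v hdisj hu hv =>
    obtain ⟨k1, hk1, he1⟩ := hu
    obtain ⟨k2, hk2, he2⟩ := hv
    exact ⟨k1 + k2, hk1.add hk2, fun x => by simp [he1 x, he2 x]⟩

/-- a.e. Doob–Dynkin factorization for real-valued functions. -/
lemma factor_ae {α β : Type*} [mα : MeasurableSpace α] [mβ : MeasurableSpace β]
    (μ : Measure α) {f : α → β} (hf : Measurable f) {u : α → ℝ}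
    (hu : StronglyMeasurable[mβ.comap f] u) :
    ∃ k : β → ℝ, Measurable k ∧ u =ᵐ[μ] fun x => k (f x) := by
  have happrox : ∀ n : ℕ, ∃ k : β → ℝ, Measurable k ∧ ∀ x, hu.approx n x = k (f x) :=
    fun n => simpleFunc_comap_factor (hu.approx n)
  choose c hc_meas hc_eq using happrox
  have htend : ∀ x, Tendsto (fun n => c n (f x)) atTop (𝓝 (u x)) := by
    intro x
    have := hu.tendsto_approx x
    simpa [fun n => hc_eq n x] using this
  have hset : MeasurableSet {y : β | ∃ l : ℝ, Tendsto (fun n => c n y) atTop (𝓝 l)} :=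
    measurableSet_exists_tendsto fun n => hc_meas n
  have hae : ∀ᵐ y ∂(μ.map f), ∃ l : ℝ, Tendsto (fun n => c n y) atTop (𝓝 l) := by
    rw [ae_iff]
    have : {y : β | ¬∃ l : ℝ, Tendsto (fun n => c n y) atTop (𝓝 l)} =
        {y : β | ∃ l : ℝ, Tendsto (fun n => c n y) atTop (𝓝 l)}ᶜ := rfl
    rw [this, Measure.map_apply hf hset.compl]
    have hempty : f ⁻¹' {y : β | ∃ l : ℝ, Tendsto (fun n => c n y) atTop (𝓝 l)}ᶜ = ∅ := by
      ext x
      simp only [Set.mem_preimage, Set.mem_compl_iff, Set.mem_setOf_eq, Set.mem_empty_iff_false,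
        iff_false, not_not]
      exact ⟨u x, htend x⟩
    rw [hempty, measure_empty]
  obtain ⟨k, hk_meas, hk_tend⟩ :=
    measurable_limit_of_tendsto_metrizable_ae (μ := μ.map f) (L := atTop)
      (fun n => (hc_meas n).aemeasurable) hae
  refine ⟨k, hk_meas, ?_⟩
  have := ae_of_ae_map hf.aemeasurable hk_tend
  filter_upwards [this] with x hx
  exact tendsto_nhds_unique (htend x) hx

/-- A conditional expectation of a function a.e. bounded above by 1 is a.e. bounded above by 1. -/
lemma condexp_le_one_of_le_one {α : Type*} {m m0 : MeasurableSpace α} {μ : Measure α}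
    (hm : m ≤ m0) [SigmaFinite (μ.trim hm)] {h : α → ℝ}
    (hint : Integrable h μ) (hle : h ≤ᵐ[μ] fun _ => (1 : ℝ)) :
    μ[h|m] ≤ᵐ[μ] fun _ => (1 : ℝ) := by
  set u := μ[h|m] with hu
  have hu_meas : StronglyMeasurable[m] u := stronglyMeasurable_condExp
  have hu_int : Integrable u μ := integrable_condExp
  -- bad sets
  have key : ∀ (n j : ℕ),
      μ ({x | 1 + ((n : ℝ) + 1)⁻¹ ≤ u x} ∩ spanningSets (μ.trim hm) j) = 0 := by
    intro n j
    set s := {x | 1 + ((n : ℝ) + 1)⁻¹ ≤ u x} ∩ spanningSets (μ.trim hm) j with hs_def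
    have hs_m : MeasurableSet[m] s :=
      (hu_meas.measurable measurableSet_Ici).inter (measurableSet_spanningSets _ j)
    have hs_meas : MeasurableSet s := hm s hs_m
    have hμs_eq : μ.trim hm s = μ s := trim_measurableSet_eq hm hs_m
    have hμs_lt : μ s < ∞ := by
      rw [← hμs_eq]
      exact lt_of_le_of_lt (measure_mono Set.inter_subset_right)
        (measure_spanningSets_lt_top (μ.trim hm) j)
    have h1 : ∫ x in s, u x ∂μ = ∫ x in s, h x ∂μ := setIntegral_condExp hm hint hs_m
    have h2 : ∫ x in s, h x ∂μ ≤ (μ s).toReal := by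
      calc ∫ x in s, h x ∂μ ≤ ∫ x in s, (1 : ℝ) ∂μ :=
            setIntegral_mono_ae hint.integrableOn
              (integrableOn_const hμs_lt.ne) hle
        _ = (μ s).toReal := by simp; rfl
    have h3 : (1 + ((n : ℝ) + 1)⁻¹) * (μ s).toReal ≤ ∫ x in s, u x ∂μ :=
      setIntegral_ge_of_const_le_real hs_meas hμs_lt.ne
        (fun x hx => hx.1) hu_int.integrableOn
    have hals : (1 + ((n : ℝ) + 1)⁻¹) * (μ s).toReal ≤ (μ s).toReal := by
      calc (1 + ((n : ℝ) + 1)⁻¹) * (μ s).toReal ≤ ∫ x in s, u x ∂μ := h3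
      _ = ∫ x in s, h x ∂μ := h1
      _ ≤ (μ s).toReal := h2
    have hpos : (0 : ℝ) < ((n : ℝ) + 1)⁻¹ := by positivity
    have htR : (μ s).toReal = 0 := by nlinarith [ENNReal.toReal_nonneg (a := μ s)]
    exact (ENNReal.toReal_eq_zero_iff _).mp htR |>.resolve_right hμs_lt.ne
  have hsub : {x | ¬ u x ≤ 1} ⊆
      ⋃ (n : ℕ) (j : ℕ), ({x | 1 + ((n : ℝ) + 1)⁻¹ ≤ u x} ∩ spanningSets (μ.trim hm) j) := by
    intro x hx
    simp only [Set.mem_setOf_eq, not_le] at hx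
    obtain ⟨n, hn⟩ := exists_nat_one_div_lt (by linarith : (0:ℝ) < u x - 1)
    have hx1 : 1 + ((n : ℝ) + 1)⁻¹ ≤ u x := by
      rw [one_div] at hn; linarith
    have hx2 : x ∈ ⋃ j, spanningSets (μ.trim hm) j := by
      rw [iUnion_spanningSets]; trivial
    obtain ⟨j, hj⟩ := Set.mem_iUnion.mp hx2
    exact Set.mem_iUnion.mpr ⟨n, Set.mem_iUnion.mpr ⟨j, ⟨hx1, hj⟩⟩⟩
  have : μ {x | ¬ u x ≤ 1} = 0 := by
    refine le_antisymm ?_ (zero_le ..)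
    refine le_trans (measure_mono hsub) ?_
    rw [show (0:ℝ≥0∞) = ∑' (n : ℕ) (j : ℕ), (0:ℝ≥0∞) by simp]
    refine le_trans (measure_iUnion_le _) (ENNReal.tsum_le_tsum fun n => ?_)
    exact le_trans (measure_iUnion_le _) (ENNReal.tsum_le_tsum fun j => le_of_eq (key n j))
  filter_upwards [(ae_iff).mpr this] with x hx
  simpa using hx


/-- There is a doubly stochastic operator `T` from `(supp f, μ)` to the interval
`[0, μ(supp f))` with Lebesgue measure, with dual `T'`, such that `T f = f↓` and
`T'(f↓) = f`.  Both `T` and `T'` are positive, map functions bounded by `1` to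
functions bounded by `1` (unitality on the `L∞` level), preserve integrals of
nonnegative functions, and are dual to each other via the pairing with bounded
nonnegative functions. -/
theorem stmt5 {X : Type*} [MeasurableSpace X] (μ : Measure X) [SigmaFinite μ]
    (f : X → ℝ) (hmeas : Measurable f) (hpos : ∀ x, 0 ≤ f x)
    (hint : Integrable f μ)
    (S : Set X) (hS : S = Function.support f)
    (J : Set ℝ) (hJ : J = {r : ℝ | 0 ≤ r ∧ ENNReal.ofReal r < μ S}) :
    ∃ (T : Lp ℝ 1 (μ.restrict S) →ₗ[ℝ] Lp ℝ 1 (volume.restrict J))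
      (T' : Lp ℝ 1 (volume.restrict J) →ₗ[ℝ] Lp ℝ 1 (μ.restrict S))
      (F : Lp ℝ 1 (μ.restrict S)) (G : Lp ℝ 1 (volume.restrict J)),
      -- F represents f and G represents the decreasing rearrangement f↓
      (⇑F =ᵐ[μ.restrict S] f) ∧
      (⇑G =ᵐ[volume.restrict J]
        fun r => (decRearr μ (fun x => ENNReal.ofReal (f x)) r).toReal) ∧
      -- positivity
      (∀ h, 0 ≤ h → 0 ≤ T h) ∧ (∀ g, 0 ≤ g → 0 ≤ T' g) ∧
      -- unitality (as maps of L∞ unit balls)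
      (∀ h : Lp ℝ 1 (μ.restrict S), (∀ᵐ x ∂(μ.restrict S), 0 ≤ h x ∧ h x ≤ 1) →
        ∀ᵐ r ∂(volume.restrict J), (T h) r ≤ 1) ∧
      (∀ g : Lp ℝ 1 (volume.restrict J), (∀ᵐ r ∂(volume.restrict J), 0 ≤ g r ∧ g r ≤ 1) →
        ∀ᵐ x ∂(μ.restrict S), (T' g) x ≤ 1) ∧
      -- integral preservation
      (∀ h : Lp ℝ 1 (μ.restrict S), 0 ≤ h →
        ∫ r, (T h) r ∂(volume.restrict J) = ∫ x, h x ∂(μ.restrict S)) ∧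
      (∀ g : Lp ℝ 1 (volume.restrict J), 0 ≤ g →
        ∫ x, (T' g) x ∂(μ.restrict S) = ∫ r, g r ∂(volume.restrict J)) ∧
      -- duality: ∫ (T h)·g dν = ∫ h·(T' g) dμ for bounded nonnegative g
      (∀ (h : Lp ℝ 1 (μ.restrict S)) (g : Lp ℝ 1 (volume.restrict J)),
        0 ≤ h → 0 ≤ g → (∀ᵐ r ∂(volume.restrict J), g r ≤ 1) →
        ∫ r, (T h) r * g r ∂(volume.restrict J)
          = ∫ x, h x * (T' g) x ∂(μ.restrict S)) ∧
      T F = G ∧ T' G = F := by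
    classical
  subst hS
  subst hJ
  set S : Set X := Function.support f with hS
  set J : Set ℝ := {r : ℝ | 0 ≤ r ∧ ENNReal.ofReal r < μ S} with hJ
  set μS := μ.restrict S with hμS
  set ν := volume.restrict J with hν
  set F0 : X → ℝ≥0∞ := fun x => ENNReal.ofReal (f x) with hF0
  set D : ℝ≥0∞ → ℝ≥0∞ := distFun μ F0 with hD
  set dr : ℝ → ℝ≥0∞ := decRearr μ F0 with hdr
  set φ : ℝ → ℝ := fun r => (dr r).toReal with hφ
  have hF0_meas : Measurable F0 := ENNReal.measurable_ofReal.comp hmeas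
  have hS_eq : S = {x | 0 < f x} := by
    rw [hS]; ext x
    simp only [Function.mem_support, Set.mem_setOf_eq]
    exact ⟨fun h => (hpos x).lt_of_ne (Ne.symm h), fun h => ne_of_gt h⟩
  have hS_meas : MeasurableSet S := by
    rw [hS_eq]; exact measurableSet_lt measurable_const hmeas
  have hD_def : ∀ t, D t = μ {x | t < F0 x} := fun t => rfl
  have hD_anti : Antitone D := by
    intro a b hab
    exact measure_mono fun x hx => lt_of_le_of_lt hab hx
  have hD0 : D 0 = μ S := by
    rw [hD_def, hS_eq]
    congr 1
    ext x
    simp [hF0, ENNReal.ofReal_pos]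
  have hI : ∫⁻ x, F0 x ∂μ < ∞ := hint.lintegral_lt_top
  have hDfin : ∀ u : ℝ≥0∞, u ≠ 0 → D u < ∞ := by
    intro u hu
    rcases eq_or_ne u ∞ with rfl | hu'
    · rw [hD_def]
      simp [not_top_lt]
    · calc D u ≤ μ {x | u ≤ F0 x} :=
            measure_mono (Set.setOf_subset_setOf.mpr fun x => le_of_lt)
        _ ≤ (∫⁻ x, F0 x ∂μ) / u := meas_ge_le_lintegral_div hF0_meas.aemeasurable hu hu'
        _ < ∞ := ENNReal.div_lt_top hI.ne hu
  have hDrc : ∀ (s c : ℝ≥0∞), s ≠ ∞ → (c < D s ↔ ∃ u, s < u ∧ c < D u) := by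
    intro s c hs
    constructor
    · intro hc
      have hunion : {x | s < F0 x} = ⋃ n : ℕ, {x | s + (n : ℝ≥0∞)⁻¹ < F0 x} := by
        ext x
        simp only [Set.mem_setOf_eq, Set.mem_iUnion]
        constructor
        · intro hx
          rcases eq_or_ne (F0 x) ∞ with hfx | hfx
          · exact ⟨1, by rw [hfx]; exact ENNReal.add_lt_top.mpr ⟨hs.lt_top, by simp⟩⟩
          · have hδ : (0 : ℝ≥0∞) < F0 x - s := tsub_pos_of_lt hx
            obtain ⟨n, hn⟩ := ENNReal.exists_inv_nat_lt hδ.ne'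
            refine ⟨n, ?_⟩
            calc s + (n : ℝ≥0∞)⁻¹ < s + (F0 x - s) := ENNReal.add_lt_add_left hs hn
              _ = F0 x := add_tsub_cancel_of_le hx.le
        · rintro ⟨n, hn⟩
          exact lt_of_le_of_lt le_self_add hn
      have hmono : Monotone fun n : ℕ => {x | s + (n : ℝ≥0∞)⁻¹ < F0 x} := by
        intro a b hab x hx
        have hx' : s + (a : ℝ≥0∞)⁻¹ < F0 x := hx
        exact lt_of_le_of_lt
          (add_le_add_right (ENNReal.inv_le_inv.mpr (by exact_mod_cast hab)) s) hx'
      rw [hD_def, hunion, hmono.directed_le.measure_iUnion] at hc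
      rw [lt_iSup_iff] at hc
      obtain ⟨n, hn⟩ := hc
      refine ⟨s + (n : ℝ≥0∞)⁻¹, ENNReal.lt_add_right hs (by simp), ?_⟩
      rwa [hD_def]
    · rintro ⟨u, hsu, hcu⟩
      exact lt_of_lt_of_le hcu (hD_anti hsu.le)
  have hdr_gt : ∀ (r : ℝ) (s : ℝ≥0∞),
      s < dr r ↔ ∃ u, s < u ∧ ENNReal.ofReal r < D u := by
    intro r s
    constructor
    · intro h
      by_contra hc
      push_neg at hc
      obtain ⟨u, hsu, hu⟩ := exists_between h
      have hu_mem : u ∈ {t : ℝ≥0∞ | 0 < t ∧ distFun μ F0 t ≤ ENNReal.ofReal r} :=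
        ⟨lt_of_le_of_lt (zero_le ..) hsu, hc u hsu⟩
      exact absurd (sInf_le hu_mem) (not_le.mpr hu)
    · rintro ⟨u, hsu, hu⟩
      have : ∀ t ∈ {t : ℝ≥0∞ | 0 < t ∧ distFun μ F0 t ≤ ENNReal.ofReal r}, u ≤ t := by
        rintro t ⟨-, ht⟩
        by_contra hut
        push_neg at hut
        exact absurd (le_trans (hD_anti hut.le) ht) (not_le.mpr hu)
      exact lt_of_lt_of_le hsu (le_sInf this)
  have hdr_gt' : ∀ (r : ℝ) (s : ℝ≥0∞), s ≠ ∞ →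
      (s < dr r ↔ ENNReal.ofReal r < D s) := by
    intro r s hs
    rw [hdr_gt r s, ← hDrc s _ hs]
  have hdr_fin : ∀ r : ℝ, 0 < r → dr r < ∞ := by
    intro r hr
    have hr0 : ENNReal.ofReal r ≠ 0 := by simp [hr, ENNReal.ofReal_pos.mpr hr]
    rcases eq_or_ne (∫⁻ x, F0 x ∂μ) 0 with hI0 | hI0
    · have : D 1 ≤ ENNReal.ofReal r := by
        calc D 1 ≤ μ {x | 1 ≤ F0 x} :=
              measure_mono (Set.setOf_subset_setOf.mpr fun x => le_of_lt)
          _ ≤ (∫⁻ x, F0 x ∂μ) / 1 :=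
              meas_ge_le_lintegral_div hF0_meas.aemeasurable one_ne_zero ENNReal.one_ne_top
          _ = 0 := by rw [hI0]; simp
          _ ≤ _ := zero_le ..
      exact lt_of_le_of_lt (sInf_le ⟨zero_lt_one, this⟩) ENNReal.one_lt_top
    · set u : ℝ≥0∞ := (∫⁻ x, F0 x ∂μ) / ENNReal.ofReal r with hu_def
      have hu0 : u ≠ 0 := ENNReal.div_ne_zero.mpr ⟨hI0, ENNReal.ofReal_ne_top⟩
      have hu_top : u ≠ ∞ := by
        rw [hu_def]
        exact (ENNReal.div_lt_top hI.ne hr0).ne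
      have hDu : D u ≤ ENNReal.ofReal r := by
        calc D u ≤ μ {x | u ≤ F0 x} :=
              measure_mono (Set.setOf_subset_setOf.mpr fun x => le_of_lt)
          _ ≤ (∫⁻ x, F0 x ∂μ) / u := meas_ge_le_lintegral_div hF0_meas.aemeasurable hu0 hu_top
          _ ≤ ENNReal.ofReal r := by
              rw [ENNReal.div_le_iff hu0 hu_top, hu_def, mul_comm,
                ENNReal.div_mul_cancel hr0 ENNReal.ofReal_ne_top]
      exact lt_of_le_of_lt (sInf_le ⟨pos_iff_ne_zero.mpr hu0, hDu⟩) hu_top.lt_top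
  have hdr_anti : Antitone dr := by
    intro a b hab
    refine sInf_le_sInf fun t ht => ⟨ht.1, le_trans ht.2 (ENNReal.ofReal_le_ofReal hab)⟩
  have hφ_meas : Measurable φ := ENNReal.measurable_toReal.comp hdr_anti.measurable
  have hφ_nonneg : ∀ r, 0 ≤ φ r := fun r => ENNReal.toReal_nonneg
  have hJ_vol : ∀ c : ℝ≥0∞, volume {r : ℝ | 0 ≤ r ∧ ENNReal.ofReal r < c} = c := by
    intro c
    rcases eq_or_ne c ∞ with rfl | hc
    · have : {r : ℝ | 0 ≤ r ∧ ENNReal.ofReal r < ∞} = Ici 0 := by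
        ext r; simp [ENNReal.ofReal_lt_top]
      rw [this, Real.volume_Ici]
    · have : {r : ℝ | 0 ≤ r ∧ ENNReal.ofReal r < c} = Ico 0 c.toReal := by
        ext r
        simp only [Set.mem_setOf_eq, Set.mem_Ico]
        constructor
        · rintro ⟨h0, h1⟩
          exact ⟨h0, (ENNReal.ofReal_lt_iff_lt_toReal h0 hc).mp h1⟩
        · rintro ⟨h0, h1⟩
          exact ⟨h0, (ENNReal.ofReal_lt_iff_lt_toReal h0 hc).mpr h1⟩
      rw [this, Real.volume_Ico, sub_zero, ENNReal.ofReal_toReal hc]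

  -- computation of the distribution of f under μS
  have hmapf : ∀ u : ℝ, Measure.map f μS (Ioi u)
      = if 0 ≤ u then D (ENNReal.ofReal u) else μ S := by
    intro u
    rw [Measure.map_apply hmeas measurableSet_Ioi, hμS,
      Measure.restrict_apply (hmeas measurableSet_Ioi)]
    by_cases h0 : 0 ≤ u
    · rw [if_pos h0, hD_def]
      congr 1
      ext x
      simp only [Set.mem_inter_iff, Set.mem_preimage, Set.mem_Ioi, hS_eq, Set.mem_setOf_eq, hF0]
      constructor
      · rintro ⟨h1, -⟩
        exact (ENNReal.ofReal_lt_ofReal_iff_of_nonneg h0).mpr h1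
      · intro h1
        have h2 : u < f x := by
          by_contra hc
          push_neg at hc
          exact absurd (lt_of_lt_of_le h1 (ENNReal.ofReal_le_ofReal hc)) (lt_irrefl _)
        exact ⟨h2, lt_of_le_of_lt h0 h2⟩
    · rw [if_neg h0]
      push_neg at h0
      congr 1
      rw [Set.inter_eq_right.mpr]
      intro x hx
      exact lt_of_lt_of_le h0 (hpos x)
  -- the distribution of φ under ν
  have hφ_pos_of_mem : ∀ r : ℝ, r ∈ J → r ≠ 0 → 0 < dr r ∧ dr r < ∞ := by
    intro r hrJ hr0
    have hr_pos : 0 < r := lt_of_le_of_ne hrJ.1 (Ne.symm hr0)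
    refine ⟨?_, hdr_fin r hr_pos⟩
    rw [hdr_gt' r 0 (by simp), hD0]
    exact hrJ.2
  have hmapφ : ∀ u : ℝ, Measure.map φ ν (Ioi u)
      = if 0 ≤ u then D (ENNReal.ofReal u) else μ S := by
    intro u
    rw [Measure.map_apply hφ_meas measurableSet_Ioi, hν,
      Measure.restrict_apply (hφ_meas measurableSet_Ioi)]
    by_cases h0 : 0 ≤ u
    · rw [if_pos h0]
      have hBD : volume {r : ℝ | 0 ≤ r ∧ ENNReal.ofReal r < D (ENNReal.ofReal u)}
          = D (ENNReal.ofReal u) := hJ_vol _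
      rw [← hBD]
      have hkey : (φ ⁻¹' Ioi u ∩ J) \ {0}
          = {r : ℝ | 0 ≤ r ∧ ENNReal.ofReal r < D (ENNReal.ofReal u)} \ {0} := by
        ext r
        simp only [Set.mem_diff, Set.mem_inter_iff, Set.mem_preimage, Set.mem_Ioi,
          Set.mem_setOf_eq, Set.mem_singleton_iff]
        constructor
        · rintro ⟨⟨hur, hrJ⟩, hr0⟩
          obtain ⟨hdr_pos, hdr_lt⟩ := hφ_pos_of_mem r hrJ hr0
          have h1 : ENNReal.ofReal u < dr r :=
            (ENNReal.ofReal_lt_iff_lt_toReal h0 hdr_lt.ne).mpr hur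
          have h2 : ENNReal.ofReal r < D (ENNReal.ofReal u) :=
            (hdr_gt' r _ ENNReal.ofReal_ne_top).mp h1
          exact ⟨⟨hrJ.1, h2⟩, hr0⟩
        · rintro ⟨⟨hr_nonneg, hrD⟩, hr0⟩
          have hr_pos : 0 < r := lt_of_le_of_ne hr_nonneg (Ne.symm hr0)
          have hrJ : r ∈ J := ⟨hr_nonneg, lt_of_lt_of_le hrD (hD0 ▸ hD_anti (zero_le ..))⟩
          have hdr_lt : dr r < ∞ := hdr_fin r hr_pos
          have h1 : ENNReal.ofReal u < dr r := (hdr_gt' r _ ENNReal.ofReal_ne_top).mpr hrD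
          have h2 : u < φ r := (ENNReal.ofReal_lt_iff_lt_toReal h0 hdr_lt.ne).mp h1
          exact ⟨⟨h2, hrJ⟩, hr0⟩
      calc volume (φ ⁻¹' Ioi u ∩ J)
          = volume ((φ ⁻¹' Ioi u ∩ J) \ {0}) := (measure_diff_null Real.volume_singleton).symm
        _ = volume ({r : ℝ | 0 ≤ r ∧ ENNReal.ofReal r < D (ENNReal.ofReal u)} \ {0}) := by
            rw [hkey]
        _ = volume {r : ℝ | 0 ≤ r ∧ ENNReal.ofReal r < D (ENNReal.ofReal u)} :=
            measure_diff_null Real.volume_singleton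
    · rw [if_neg h0]
      push_neg at h0
      have : φ ⁻¹' Ioi u ∩ J = J := by
        rw [Set.inter_eq_right.mpr]
        intro r hr
        exact lt_of_lt_of_le h0 (hφ_nonneg r)
      rw [this, hJ]
      exact hJ_vol (μ S)
  have hIoi_eq : ∀ u : ℝ, Measure.map φ ν (Ioi u) = Measure.map f μS (Ioi u) := by
    intro u; rw [hmapφ, hmapf]
  have hfin_Ioi : ∀ u : ℝ, 0 < u → Measure.map f μS (Ioi u) < ∞ := by
    intro u hu
    rw [hmapf, if_pos hu.le]
    exact hDfin _ (by simp [ENNReal.ofReal_pos.mpr hu, ne_of_gt])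
  have hIic_f : Measure.map f μS (Iic 0) = 0 := by
    rw [Measure.map_apply hmeas measurableSet_Iic, hμS,
      Measure.restrict_apply (hmeas measurableSet_Iic)]
    have : f ⁻¹' Iic 0 ∩ S = ∅ := by
      ext x
      simp only [Set.mem_inter_iff, Set.mem_preimage, Set.mem_Iic, hS_eq, Set.mem_setOf_eq,
        Set.mem_empty_iff_false, iff_false, not_and, not_lt]
      exact fun h => h
    rw [this, measure_empty]
  have hIic_φ : Measure.map φ ν (Iic 0) = 0 := by
    rw [Measure.map_apply hφ_meas measurableSet_Iic, hν,
      Measure.restrict_apply (hφ_meas measurableSet_Iic)]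
    refine le_antisymm (le_trans (measure_mono (show φ ⁻¹' Iic 0 ∩ J ⊆ {(0:ℝ)} from ?_))
      (le_of_eq Real.volume_singleton)) (zero_le ..)
    intro r hr
    rcases eq_or_ne r 0 with h | h
    · exact h
    · exfalso
      obtain ⟨hdr_pos, hdr_lt⟩ := hφ_pos_of_mem r hr.2 h
      have h2 : 0 < φ r := ENNReal.toReal_pos hdr_pos.ne' hdr_lt.ne
      exact absurd h2 (not_lt.mpr hr.1)
  -- equality of the two pushforward measures
  have hmap_eq : Measure.map φ ν = Measure.map f μS := by
    have hres : ∀ t : ℝ, 0 < t →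
        (Measure.map φ ν).restrict (Ioi t) = (Measure.map f μS).restrict (Ioi t) := by
      intro t ht
      haveI h1 : IsFiniteMeasure ((Measure.map φ ν).restrict (Ioi t)) := by
        constructor
        rw [Measure.restrict_apply_univ, hIoi_eq]
        exact hfin_Ioi t ht
      haveI h2 : IsFiniteMeasure ((Measure.map f μS).restrict (Ioi t)) := by
        constructor
        rw [Measure.restrict_apply_univ]
        exact hfin_Ioi t ht
      refine ext_of_generate_finite (Set.range Ioi) ?_ isPiSystem_Ioi ?_ ?_
      · rw [(inferInstance : BorelSpace ℝ).measurable_eq]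
        exact borel_eq_generateFrom_Ioi ℝ
      · rintro s ⟨a, rfl⟩
        rw [Measure.restrict_apply measurableSet_Ioi, Measure.restrict_apply measurableSet_Ioi,
          Ioi_inter_Ioi]
        exact hIoi_eq _
      · rw [Measure.restrict_apply_univ, Measure.restrict_apply_univ]
        exact hIoi_eq t
    have hdecomp : ∀ m : Measure ℝ, m (Iic 0) = 0 → ∀ A : Set ℝ, MeasurableSet A →
        m A = ⨆ n : ℕ, m (A ∩ Ioi ((n : ℝ) + 1)⁻¹) := by
      intro m hm A hA
      have h1 : m A = m (A ∩ Ioi 0) := by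
        have := measure_inter_add_diff A (measurableSet_Ioi (a := (0:ℝ))) (μ := m)
        have h2 : m (A \ Ioi 0) = 0 := by
          refine le_antisymm (le_trans (measure_mono ?_) hm.le) (zero_le ..)
          intro r hr
          simpa using hr.2
        rw [← this, h2, add_zero]
      have h2 : A ∩ Ioi 0 = ⋃ n : ℕ, A ∩ Ioi ((n : ℝ) + 1)⁻¹ := by
        ext r
        simp only [Set.mem_inter_iff, Set.mem_Ioi, Set.mem_iUnion]
        constructor
        · rintro ⟨hA', hr⟩
          obtain ⟨n, hn⟩ := exists_nat_one_div_lt hr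
          rw [one_div] at hn
          exact ⟨n, hA', hn⟩
        · rintro ⟨n, hA', hn⟩
          exact ⟨hA', lt_trans (by positivity) hn⟩
      have hmono : Monotone fun n : ℕ => A ∩ Ioi ((n : ℝ) + 1)⁻¹ := by
        intro a b hab
        refine Set.inter_subset_inter_right _ (Ioi_subset_Ioi ?_)
        have : (a : ℝ) + 1 ≤ (b : ℝ) + 1 := by exact_mod_cast add_le_add_left hab 1
        exact inv_anti₀ (by positivity) this
      rw [h1, h2, hmono.directed_le.measure_iUnion]
    ext A hA
    rw [hdecomp _ hIic_φ A hA, hdecomp _ hIic_f A hA]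
    congr 1
    ext n
    have hpos : (0:ℝ) < ((n : ℝ) + 1)⁻¹ := by positivity
    calc Measure.map φ ν (A ∩ Ioi ((n : ℝ) + 1)⁻¹)
        = ((Measure.map φ ν).restrict (Ioi ((n : ℝ) + 1)⁻¹)) A := by
          rw [Measure.restrict_apply hA]
      _ = ((Measure.map f μS).restrict (Ioi ((n : ℝ) + 1)⁻¹)) A := by rw [hres _ hpos]
      _ = Measure.map f μS (A ∩ Ioi ((n : ℝ) + 1)⁻¹) := by rw [Measure.restrict_apply hA]

  -- sub-σ-algebras
  have hm : mco f ≤ (inferInstance : MeasurableSpace X) := hmeas.comap_le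
  have hm' : mco φ ≤ (inferInstance : MeasurableSpace ℝ) := hφ_meas.comap_le
  have hfm : Measurable[mco f] f := fun s hs => ⟨s, hs, rfl⟩
  have hφm' : Measurable[mco φ] φ := fun s hs => ⟨s, hs, rfl⟩
  -- σ-finiteness of the trimmed measures
  have hspan_mem : ∀ (n : ℕ), MeasurableSet (Iic (0:ℝ) ∪ Ioi ((n : ℝ) + 1)⁻¹) := fun n =>
    measurableSet_Iic.union measurableSet_Ioi
  have hspan_univ : (⋃ n : ℕ, Iic (0:ℝ) ∪ Ioi ((n : ℝ) + 1)⁻¹) = Set.univ := by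
    ext y
    simp only [Set.mem_iUnion, Set.mem_union, Set.mem_Iic, Set.mem_Ioi, Set.mem_univ, iff_true]
    rcases le_or_gt y 0 with h | h
    · exact ⟨0, Or.inl h⟩
    · obtain ⟨n, hn⟩ := exists_nat_one_div_lt h
      rw [one_div] at hn
      exact ⟨n, Or.inr hn⟩
  haveI hsf1 : SigmaFinite (μS.trim hm) := by
    refine ⟨⟨⟨fun n => f ⁻¹' (Iic 0 ∪ Ioi ((n : ℝ) + 1)⁻¹), fun _ => trivial, ?_, ?_⟩⟩⟩
    · intro n
      have hmem : MeasurableSet[mco f] (f ⁻¹' (Iic 0 ∪ Ioi ((n : ℝ) + 1)⁻¹)) :=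
        ⟨_, hspan_mem n, rfl⟩
      rw [trim_measurableSet_eq hm hmem, Set.preimage_union]
      refine lt_of_le_of_lt (measure_union_le _ _) ?_
      have e1 : μS (f ⁻¹' Iic 0) = 0 := by
        rw [← Measure.map_apply hmeas measurableSet_Iic]
        exact hIic_f
      have e2 : μS (f ⁻¹' Ioi ((n : ℝ) + 1)⁻¹) < ∞ := by
        rw [← Measure.map_apply hmeas measurableSet_Ioi]
        exact hfin_Ioi _ (by positivity)
      rw [e1, zero_add]
      exact e2
    · rw [← Set.preimage_iUnion, hspan_univ, Set.preimage_univ]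
  haveI hsf2 : SigmaFinite (ν.trim hm') := by
    refine ⟨⟨⟨fun n => φ ⁻¹' (Iic 0 ∪ Ioi ((n : ℝ) + 1)⁻¹), fun _ => trivial, ?_, ?_⟩⟩⟩
    · intro n
      have hmem : MeasurableSet[mco φ] (φ ⁻¹' (Iic 0 ∪ Ioi ((n : ℝ) + 1)⁻¹)) :=
        ⟨_, hspan_mem n, rfl⟩
      rw [trim_measurableSet_eq hm' hmem, Set.preimage_union]
      refine lt_of_le_of_lt (measure_union_le _ _) ?_
      have e1 : ν (φ ⁻¹' Iic 0) = 0 := by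
        rw [← Measure.map_apply hφ_meas measurableSet_Iic]
        exact hIic_φ
      have e2 : ν (φ ⁻¹' Ioi ((n : ℝ) + 1)⁻¹) < ∞ := by
        rw [← Measure.map_apply hφ_meas measurableSet_Ioi, hIoi_eq]
        exact hfin_Ioi _ (by positivity)
      rw [e1, zero_add]
      exact e2
    · rw [← Set.preimage_iUnion, hspan_univ, Set.preimage_univ]
  -- transfer of a.e. properties between the two spaces
  have hpush : ∀ N : Set ℝ, MeasurableSet N → (μS (f ⁻¹' N) = 0 ↔ ν (φ ⁻¹' N) = 0) := by
    intro N hN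
    rw [← Measure.map_apply hmeas hN, ← Measure.map_apply hφ_meas hN, hmap_eq]
  have htrans_fφ : ∀ (N : Set ℝ), MeasurableSet N → (∀ᵐ x ∂μS, f x ∈ N) → (∀ᵐ r ∂ν, φ r ∈ N) := by
    intro N hN hae
    rw [ae_iff] at hae ⊢
    have e1 : {x | ¬ f x ∈ N} = f ⁻¹' Nᶜ := rfl
    have e2 : {r | ¬ φ r ∈ N} = φ ⁻¹' Nᶜ := rfl
    rw [e2, ← hpush _ hN.compl, ← e1]
    exact hae
  have htrans_φf : ∀ (N : Set ℝ), MeasurableSet N → (∀ᵐ r ∂ν, φ r ∈ N) → (∀ᵐ x ∂μS, f x ∈ N) := by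
    intro N hN hae
    rw [ae_iff] at hae ⊢
    have e1 : {x | ¬ f x ∈ N} = f ⁻¹' Nᶜ := rfl
    have e2 : {r | ¬ φ r ∈ N} = φ ⁻¹' Nᶜ := rfl
    rw [e1, hpush _ hN.compl, ← e2]
    exact hae
  have hcomp_congr : ∀ {g₁ g₂ : ℝ → ℝ}, Measurable g₁ → Measurable g₂ →
      ((fun x => g₁ (f x)) =ᵐ[μS] fun x => g₂ (f x)) →
      ((fun r => g₁ (φ r)) =ᵐ[ν] fun r => g₂ (φ r)) := by
    intro g₁ g₂ h₁ h₂ hae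
    have hN : MeasurableSet {y : ℝ | g₁ y = g₂ y} :=
      measurableSet_eq_fun h₁ h₂
    have h3 : ∀ᵐ x ∂μS, f x ∈ {y : ℝ | g₁ y = g₂ y} := hae
    have h4 := htrans_fφ _ hN h3
    exact h4
  have hcomp_congr' : ∀ {g₁ g₂ : ℝ → ℝ}, Measurable g₁ → Measurable g₂ →
      ((fun r => g₁ (φ r)) =ᵐ[ν] fun r => g₂ (φ r)) →
      ((fun x => g₁ (f x)) =ᵐ[μS] fun x => g₂ (f x)) := by
    intro g₁ g₂ h₁ h₂ hae
    have hN : MeasurableSet {y : ℝ | g₁ y = g₂ y} :=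
      measurableSet_eq_fun h₁ h₂
    have h3 : ∀ᵐ r ∂ν, φ r ∈ {y : ℝ | g₁ y = g₂ y} := hae
    have h4 := htrans_φf _ hN h3
    exact h4
  -- factorization of the conditional expectations
  have hfac1 : ∀ h : Lp ℝ 1 μS, ∃ k : ℝ → ℝ, Measurable k ∧
      (μS[⇑h | mco f]) =ᵐ[μS] fun x => k (f x) :=
    fun h => factor_ae μS hmeas stronglyMeasurable_condExp
  choose k1 hk1_meas hk1_eq using hfac1
  have hfac2 : ∀ g : Lp ℝ 1 ν, ∃ k : ℝ → ℝ, Measurable k ∧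
      (ν[⇑g | mco φ]) =ᵐ[ν] fun r => k (φ r) :=
    fun g => factor_ae ν hφ_meas stronglyMeasurable_condExp
  choose k2 hk2_meas hk2_eq using hfac2
  -- integrability of transported functions
  have hmove1 : ∀ kk : ℝ → ℝ, Measurable kk → Integrable (fun x => kk (f x)) μS →
      Integrable (fun r => kk (φ r)) ν := by
    intro kk hkk h1
    have h2 : Integrable kk (Measure.map f μS) :=
      (integrable_map_measure hkk.aestronglyMeasurable hmeas.aemeasurable).mpr h1
    rw [← hmap_eq] at h2
    exact (integrable_map_measure hkk.aestronglyMeasurable hφ_meas.aemeasurable).mp h2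
  have hmove2 : ∀ kk : ℝ → ℝ, Measurable kk → Integrable (fun r => kk (φ r)) ν →
      Integrable (fun x => kk (f x)) μS := by
    intro kk hkk h1
    have h2 : Integrable kk (Measure.map φ ν) :=
      (integrable_map_measure hkk.aestronglyMeasurable hφ_meas.aemeasurable).mpr h1
    rw [hmap_eq] at h2
    exact (integrable_map_measure hkk.aestronglyMeasurable hmeas.aemeasurable).mp h2
  have hint1 : ∀ h : Lp ℝ 1 μS, Integrable (fun r => k1 h (φ r)) ν := by
    intro h
    exact hmove1 _ (hk1_meas h) ((integrable_condExp).congr (hk1_eq h))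
  have hint2 : ∀ g : Lp ℝ 1 ν, Integrable (fun x => k2 g (f x)) μS := by
    intro g
    exact hmove2 _ (hk2_meas g) ((integrable_condExp).congr (hk2_eq g))

  have hLp1 : ∀ h : Lp ℝ 1 μS, Integrable (⇑h) μS := fun h => L1.integrable_coeFn h
  have hLp2 : ∀ g : Lp ℝ 1 ν, Integrable (⇑g) ν := fun g => L1.integrable_coeFn g
  -- the operators as plain functions
  set Tfun : Lp ℝ 1 μS → Lp ℝ 1 ν := fun h => Integrable.toL1 _ (hint1 h) with hTfun_def
  set Tfun' : Lp ℝ 1 ν → Lp ℝ 1 μS := fun g => Integrable.toL1 _ (hint2 g) with hTfun'_def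
  have hT_coe : ∀ h, ⇑(Tfun h) =ᵐ[ν] fun r => k1 h (φ r) := fun h => (hint1 h).coeFn_toL1
  have hT'_coe : ∀ g, ⇑(Tfun' g) =ᵐ[μS] fun x => k2 g (f x) := fun g => (hint2 g).coeFn_toL1
  -- linearity
  have hT_add : ∀ h h' : Lp ℝ 1 μS, Tfun (h + h') = Tfun h + Tfun h' := by
    intro h h'
    refine Lp.ext (?_ : _ =ᵐ[ν] _)
    have e1 : (fun x => k1 (h + h') (f x)) =ᵐ[μS] fun x => k1 h (f x) + k1 h' (f x) := by
      have c2 : (μS[⇑(h + h') | mco f]) =ᵐ[μS] μS[(⇑h + ⇑h') | mco f] :=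
        condExp_congr_ae (Lp.coeFn_add h h')
      have c3 : (μS[(⇑h + ⇑h') | mco f]) =ᵐ[μS] μS[⇑h | mco f] + μS[⇑h' | mco f] :=
        condExp_add (hLp1 h) (hLp1 h') _
      filter_upwards [hk1_eq (h + h'), c2, c3, hk1_eq h, hk1_eq h'] with x e2 e3 e4 e5 e6
      rw [← e2, e3, e4, Pi.add_apply, e5, e6]
    have e2 := hcomp_congr (hk1_meas (h + h')) ((hk1_meas h).add (hk1_meas h')) e1
    calc ⇑(Tfun (h + h')) =ᵐ[ν] fun r => k1 (h + h') (φ r) := hT_coe _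
      _ =ᵐ[ν] fun r => k1 h (φ r) + k1 h' (φ r) := e2
      _ =ᵐ[ν] ⇑(Tfun h + Tfun h') := by
          filter_upwards [hT_coe h, hT_coe h', Lp.coeFn_add (Tfun h) (Tfun h')]
            with r e3 e4 e5
          rw [e5, Pi.add_apply, e3, e4]
  have hT_smul : ∀ (c : ℝ) (h : Lp ℝ 1 μS), Tfun (c • h) = c • Tfun h := by
    intro c h
    refine Lp.ext (?_ : _ =ᵐ[ν] _)
    have e1 : (fun x => k1 (c • h) (f x)) =ᵐ[μS] fun x => c * k1 h (f x) := by
      have c2 : (μS[⇑(c • h) | mco f]) =ᵐ[μS] μS[c • ⇑h | mco f] :=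
        condExp_congr_ae (Lp.coeFn_smul c h)
      have c3 : (μS[c • ⇑h | mco f]) =ᵐ[μS] c • μS[⇑h | mco f] := condExp_smul c ⇑h _
      filter_upwards [hk1_eq (c • h), c2, c3, hk1_eq h] with x e2 e3 e4 e5
      rw [← e2, e3, e4, Pi.smul_apply, e5, smul_eq_mul]
    have e2 := hcomp_congr (hk1_meas (c • h)) (measurable_const.mul (hk1_meas h)) e1
    calc ⇑(Tfun (c • h)) =ᵐ[ν] fun r => k1 (c • h) (φ r) := hT_coe _
      _ =ᵐ[ν] fun r => c * k1 h (φ r) := e2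
      _ =ᵐ[ν] ⇑(c • Tfun h) := by
          filter_upwards [hT_coe h, Lp.coeFn_smul c (Tfun h)] with r e3 e4
          rw [e4, Pi.smul_apply, e3, smul_eq_mul]
  have hT'_add : ∀ g g' : Lp ℝ 1 ν, Tfun' (g + g') = Tfun' g + Tfun' g' := by
    intro g g'
    refine Lp.ext (?_ : _ =ᵐ[μS] _)
    have e1 : (fun r => k2 (g + g') (φ r)) =ᵐ[ν] fun r => k2 g (φ r) + k2 g' (φ r) := by
      have c2 : (ν[⇑(g + g') | mco φ]) =ᵐ[ν] ν[(⇑g + ⇑g') | mco φ] :=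
        condExp_congr_ae (Lp.coeFn_add g g')
      have c3 : (ν[(⇑g + ⇑g') | mco φ]) =ᵐ[ν] ν[⇑g | mco φ] + ν[⇑g' | mco φ] :=
        condExp_add (hLp2 g) (hLp2 g') _
      filter_upwards [hk2_eq (g + g'), c2, c3, hk2_eq g, hk2_eq g'] with r e2 e3 e4 e5 e6
      rw [← e2, e3, e4, Pi.add_apply, e5, e6]
    have e2 := hcomp_congr' (hk2_meas (g + g')) ((hk2_meas g).add (hk2_meas g')) e1
    calc ⇑(Tfun' (g + g')) =ᵐ[μS] fun x => k2 (g + g') (f x) := hT'_coe _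
      _ =ᵐ[μS] fun x => k2 g (f x) + k2 g' (f x) := e2
      _ =ᵐ[μS] ⇑(Tfun' g + Tfun' g') := by
          filter_upwards [hT'_coe g, hT'_coe g', Lp.coeFn_add (Tfun' g) (Tfun' g')]
            with x e3 e4 e5
          rw [e5, Pi.add_apply, e3, e4]
  have hT'_smul : ∀ (c : ℝ) (g : Lp ℝ 1 ν), Tfun' (c • g) = c • Tfun' g := by
    intro c g
    refine Lp.ext (?_ : _ =ᵐ[μS] _)
    have e1 : (fun r => k2 (c • g) (φ r)) =ᵐ[ν] fun r => c * k2 g (φ r) := by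
      have c2 : (ν[⇑(c • g) | mco φ]) =ᵐ[ν] ν[c • ⇑g | mco φ] :=
        condExp_congr_ae (Lp.coeFn_smul c g)
      have c3 : (ν[c • ⇑g | mco φ]) =ᵐ[ν] c • ν[⇑g | mco φ] := condExp_smul c ⇑g _
      filter_upwards [hk2_eq (c • g), c2, c3, hk2_eq g] with r e2 e3 e4 e5
      rw [← e2, e3, e4, Pi.smul_apply, e5, smul_eq_mul]
    have e2 := hcomp_congr' (hk2_meas (c • g)) (measurable_const.mul (hk2_meas g)) e1
    calc ⇑(Tfun' (c • g)) =ᵐ[μS] fun x => k2 (c • g) (f x) := hT'_coe _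
      _ =ᵐ[μS] fun x => c * k2 g (f x) := e2
      _ =ᵐ[μS] ⇑(c • Tfun' g) := by
          filter_upwards [hT'_coe g, Lp.coeFn_smul c (Tfun' g)] with x e3 e4
          rw [e4, Pi.smul_apply, e3, smul_eq_mul]

  -- positivity helpers
  have hTpos : ∀ h : Lp ℝ 1 μS, 0 ≤ h → ∀ᵐ r ∂ν, 0 ≤ k1 h (φ r) := by
    intro h h0
    have h1 : (0 : X → ℝ) ≤ᵐ[μS] ⇑h := (Lp.coeFn_nonneg _).mpr h0
    have h2 : (0 : X → ℝ) ≤ᵐ[μS] μS[⇑h | mco f] := condExp_nonneg h1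
    have h3 : ∀ᵐ x ∂μS, f x ∈ {y : ℝ | 0 ≤ k1 h y} := by
      filter_upwards [h2, hk1_eq h] with x hx he
      show 0 ≤ k1 h (f x)
      rw [← he]
      exact hx
    have h4 := htrans_fφ _ (measurableSet_le measurable_const (hk1_meas h)) h3
    filter_upwards [h4] with r hr
    exact hr
  have hT'pos : ∀ g : Lp ℝ 1 ν, 0 ≤ g → ∀ᵐ x ∂μS, 0 ≤ k2 g (f x) := by
    intro g g0
    have h1 : (0 : ℝ → ℝ) ≤ᵐ[ν] ⇑g := (Lp.coeFn_nonneg _).mpr g0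
    have h2 : (0 : ℝ → ℝ) ≤ᵐ[ν] ν[⇑g | mco φ] := condExp_nonneg h1
    have h3 : ∀ᵐ r ∂ν, φ r ∈ {y : ℝ | 0 ≤ k2 g y} := by
      filter_upwards [h2, hk2_eq g] with r hr he
      show 0 ≤ k2 g (φ r)
      rw [← he]
      exact hr
    have h4 := htrans_φf _ (measurableSet_le measurable_const (hk2_meas g)) h3
    filter_upwards [h4] with x hx
    exact hx
  -- boundedness helpers
  have hTle1 : ∀ h : Lp ℝ 1 μS, (⇑h ≤ᵐ[μS] fun _ => (1:ℝ)) → ∀ᵐ r ∂ν, k1 h (φ r) ≤ 1 := by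
    intro h hb
    have h2 := condexp_le_one_of_le_one hm (hLp1 h) hb
    have h3 : ∀ᵐ x ∂μS, f x ∈ {y : ℝ | k1 h y ≤ 1} := by
      filter_upwards [h2, hk1_eq h] with x hx he
      show k1 h (f x) ≤ 1
      rw [← he]
      exact hx
    have h4 := htrans_fφ _ (measurableSet_le (hk1_meas h) measurable_const) h3
    filter_upwards [h4] with r hr
    exact hr
  have hT'le1 : ∀ g : Lp ℝ 1 ν, (⇑g ≤ᵐ[ν] fun _ => (1:ℝ)) → ∀ᵐ x ∂μS, k2 g (f x) ≤ 1 := by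
    intro g hb
    have h2 := condexp_le_one_of_le_one hm' (hLp2 g) hb
    have h3 : ∀ᵐ r ∂ν, φ r ∈ {y : ℝ | k2 g y ≤ 1} := by
      filter_upwards [h2, hk2_eq g] with r hr he
      show k2 g (φ r) ≤ 1
      rw [← he]
      exact hr
    have h4 := htrans_φf _ (measurableSet_le (hk2_meas g) measurable_const) h3
    filter_upwards [h4] with x hx
    exact hx
  -- transport of integrals
  have hmap_int : ∀ kk : ℝ → ℝ, Measurable kk →
      ∫ r, kk (φ r) ∂ν = ∫ x, kk (f x) ∂μS := by
    intro kk hkk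
    have e1 : ∫ y, kk y ∂(Measure.map φ ν) = ∫ r, kk (φ r) ∂ν :=
      integral_map hφ_meas.aemeasurable hkk.aestronglyMeasurable
    have e2 : ∫ y, kk y ∂(Measure.map f μS) = ∫ x, kk (f x) ∂μS :=
      integral_map hmeas.aemeasurable hkk.aestronglyMeasurable
    rw [← e1, ← e2, hmap_eq]
  -- integral preservation
  have hTint_eq : ∀ h : Lp ℝ 1 μS, ∫ r, (Tfun h) r ∂ν = ∫ x, h x ∂μS := by
    intro h
    calc ∫ r, (Tfun h) r ∂ν = ∫ r, k1 h (φ r) ∂ν := integral_congr_ae (hT_coe h)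
      _ = ∫ x, k1 h (f x) ∂μS := hmap_int _ (hk1_meas h)
      _ = ∫ x, (μS[⇑h | mco f]) x ∂μS := integral_congr_ae (hk1_eq h).symm
      _ = ∫ x, h x ∂μS := integral_condExp hm
  have hT'int_eq : ∀ g : Lp ℝ 1 ν, ∫ x, (Tfun' g) x ∂μS = ∫ r, g r ∂ν := by
    intro g
    calc ∫ x, (Tfun' g) x ∂μS = ∫ x, k2 g (f x) ∂μS := integral_congr_ae (hT'_coe g)
      _ = ∫ r, k2 g (φ r) ∂ν := (hmap_int _ (hk2_meas g)).symm
      _ = ∫ r, (ν[⇑g | mco φ]) r ∂ν := integral_congr_ae (hk2_eq g).symm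
      _ = ∫ r, g r ∂ν := integral_condExp hm'

  -- duality
  have hdual : ∀ (h : Lp ℝ 1 μS) (g : Lp ℝ 1 ν), 0 ≤ g → (∀ᵐ r ∂ν, g r ≤ 1) →
      ∫ r, (Tfun h) r * g r ∂ν = ∫ x, h x * (Tfun' g) x ∂μS := by
    intro h g g0 g1
    have hg_int := hLp2 g
    have hg0 : (0 : ℝ → ℝ) ≤ᵐ[ν] ⇑g := (Lp.coeFn_nonneg _).mpr g0
    have hg1 : ⇑g ≤ᵐ[ν] fun _ => (1:ℝ) := g1
    have hv0 : ∀ᵐ x ∂μS, 0 ≤ k2 g (f x) := hT'pos g g0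
    have hv1 : ∀ᵐ x ∂μS, k2 g (f x) ≤ 1 := hT'le1 g hg1
    have hsm1 : StronglyMeasurable[mco φ] (fun r => k1 h (φ r)) :=
      Measurable.stronglyMeasurable ((hk1_meas h).comp hφm')
    have hsm2 : StronglyMeasurable[mco f] (fun x => k2 g (f x)) :=
      Measurable.stronglyMeasurable ((hk2_meas g).comp hfm)
    have hb1 : Integrable (fun r => k1 h (φ r) * g r) ν := by
      refine Integrable.mono (hint1 h)
        (((hk1_meas h).comp hφ_meas).aestronglyMeasurable.mul (Lp.aestronglyMeasurable g)) ?_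
      filter_upwards [hg0, hg1] with r h0 h1
      rw [norm_mul]
      calc ‖k1 h (φ r)‖ * ‖g r‖ ≤ ‖k1 h (φ r)‖ * 1 := by
            refine mul_le_mul_of_nonneg_left ?_ (norm_nonneg _)
            rw [Real.norm_eq_abs, abs_of_nonneg h0]
            exact h1
        _ = ‖k1 h (φ r)‖ := mul_one _
    have hb2 : Integrable (fun x => k2 g (f x) * h x) μS := by
      refine Integrable.mono (hLp1 h)
        (((hk2_meas g).comp hmeas).aestronglyMeasurable.mul (Lp.aestronglyMeasurable h)) ?_
      filter_upwards [hv0, hv1] with x h0 h1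
      rw [norm_mul]
      calc ‖k2 g (f x)‖ * ‖h x‖ ≤ 1 * ‖h x‖ := by
            refine mul_le_mul_of_nonneg_right ?_ (norm_nonneg _)
            rw [Real.norm_eq_abs, abs_of_nonneg h0]
            exact h1
        _ = ‖h x‖ := one_mul _
    have hc1 : (ν[(fun r => k1 h (φ r)) * ⇑g | mco φ]) =ᵐ[ν]
        (fun r => k1 h (φ r)) * ν[⇑g | mco φ] :=
      condExp_mul_of_stronglyMeasurable_left hsm1 (by exact hb1) hg_int
    have hc2 : (μS[(fun x => k2 g (f x)) * ⇑h | mco f]) =ᵐ[μS]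
        (fun x => k2 g (f x)) * μS[⇑h | mco f] :=
      condExp_mul_of_stronglyMeasurable_left hsm2 (by exact hb2) (hLp1 h)
    have e1 : ∫ r, (Tfun h) r * g r ∂ν = ∫ r, k1 h (φ r) * g r ∂ν := by
      refine integral_congr_ae ?_
      filter_upwards [hT_coe h] with r hr
      rw [hr]
    have e2 : ∫ r, k1 h (φ r) * g r ∂ν = ∫ r, k1 h (φ r) * (ν[⇑g | mco φ]) r ∂ν := by
      have i1 : ∫ r, ((fun r => k1 h (φ r)) * ⇑g) r ∂ν
          = ∫ r, (ν[(fun r => k1 h (φ r)) * ⇑g | mco φ]) r ∂ν := (integral_condExp hm').symm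
      have i2 : ∫ r, (ν[(fun r => k1 h (φ r)) * ⇑g | mco φ]) r ∂ν
          = ∫ r, ((fun r => k1 h (φ r)) * ν[⇑g | mco φ]) r ∂ν := integral_congr_ae hc1
      simpa [Pi.mul_apply] using i1.trans i2
    have e3 : ∫ r, k1 h (φ r) * (ν[⇑g | mco φ]) r ∂ν
        = ∫ r, k1 h (φ r) * k2 g (φ r) ∂ν := by
      refine integral_congr_ae ?_
      filter_upwards [hk2_eq g] with r hr
      rw [hr]
    have e4 : ∫ r, k1 h (φ r) * k2 g (φ r) ∂ν = ∫ x, k1 h (f x) * k2 g (f x) ∂μS :=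
      hmap_int (fun y => k1 h y * k2 g y) ((hk1_meas h).mul (hk2_meas g))
    have e5 : ∫ x, k1 h (f x) * k2 g (f x) ∂μS
        = ∫ x, k2 g (f x) * (μS[⇑h | mco f]) x ∂μS := by
      refine integral_congr_ae ?_
      filter_upwards [hk1_eq h] with x hx
      rw [hx, mul_comm]
    have e6 : ∫ x, k2 g (f x) * (μS[⇑h | mco f]) x ∂μS = ∫ x, k2 g (f x) * h x ∂μS := by
      have i1 : ∫ x, ((fun x => k2 g (f x)) * ⇑h) x ∂μS
          = ∫ x, (μS[(fun x => k2 g (f x)) * ⇑h | mco f]) x ∂μS := (integral_condExp hm).symm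
      have i2 : ∫ x, (μS[(fun x => k2 g (f x)) * ⇑h | mco f]) x ∂μS
          = ∫ x, ((fun x => k2 g (f x)) * μS[⇑h | mco f]) x ∂μS := integral_congr_ae hc2
      have := (i1.trans i2).symm
      simpa [Pi.mul_apply] using this
    have e7 : ∫ x, k2 g (f x) * h x ∂μS = ∫ x, h x * (Tfun' g) x ∂μS := by
      refine integral_congr_ae ?_
      filter_upwards [hT'_coe g] with x hx
      rw [hx, mul_comm]
    rw [e1, e2, e3, e4, e5, e6, e7]
  -- remaining data
  have hf_int' : Integrable f μS := hint.restrict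
  have hφ_int : Integrable φ ν := hmove1 id measurable_id hf_int'
  set Fel : Lp ℝ 1 μS := Integrable.toL1 f hf_int' with hFel_def
  set Gel : Lp ℝ 1 ν := Integrable.toL1 φ hφ_int with hGel_def
  have hTF : Tfun Fel = Gel := by
    refine Lp.ext (?_ : _ =ᵐ[ν] _)
    have c1 : (μS[⇑Fel | mco f]) =ᵐ[μS] μS[f | mco f] :=
      condExp_congr_ae hf_int'.coeFn_toL1
    have c2 : μS[f | mco f] = f :=
      condExp_of_stronglyMeasurable hm (Measurable.stronglyMeasurable hfm) hf_int'
    have e1 : (fun x => k1 Fel (f x)) =ᵐ[μS] fun x => id (f x) := by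
      filter_upwards [hk1_eq Fel, c1] with x h1 h2
      rw [← h1, h2, c2]
      rfl
    have e2 := hcomp_congr (hk1_meas Fel) measurable_id e1
    calc ⇑(Tfun Fel) =ᵐ[ν] fun r => k1 Fel (φ r) := hT_coe _
      _ =ᵐ[ν] fun r => id (φ r) := e2
      _ =ᵐ[ν] ⇑Gel := hφ_int.coeFn_toL1.symm
  have hT'G : Tfun' Gel = Fel := by
    refine Lp.ext (?_ : _ =ᵐ[μS] _)
    have c1 : (ν[⇑Gel | mco φ]) =ᵐ[ν] ν[φ | mco φ] :=
      condExp_congr_ae hφ_int.coeFn_toL1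
    have c2 : ν[φ | mco φ] = φ :=
      condExp_of_stronglyMeasurable hm' (Measurable.stronglyMeasurable hφm') hφ_int
    have e1 : (fun r => k2 Gel (φ r)) =ᵐ[ν] fun r => id (φ r) := by
      filter_upwards [hk2_eq Gel, c1] with r h1 h2
      rw [← h1, h2, c2]
      rfl
    have e2 := hcomp_congr' (hk2_meas Gel) measurable_id e1
    calc ⇑(Tfun' Gel) =ᵐ[μS] fun x => k2 Gel (f x) := hT'_coe _
      _ =ᵐ[μS] fun x => id (f x) := e2
      _ =ᵐ[μS] ⇑Fel := hf_int'.coeFn_toL1.symm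
  -- assembly
  refine ⟨{ toFun := Tfun, map_add' := hT_add, map_smul' := hT_smul },
          { toFun := Tfun', map_add' := hT'_add, map_smul' := hT'_smul },
          Fel, Gel, hf_int'.coeFn_toL1, hφ_int.coeFn_toL1,
          ?_, ?_, ?_, ?_, ?_, ?_, ?_, hTF, hT'G⟩
  · intro h h0
    refine (Lp.coeFn_nonneg _).mp ?_
    filter_upwards [hT_coe h, hTpos h h0] with r e p
    show (0 : ℝ → ℝ) r ≤ (Tfun h) r
    rw [Pi.zero_apply, e]
    exact p
  · intro g g0
    refine (Lp.coeFn_nonneg _).mp ?_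
    filter_upwards [hT'_coe g, hT'pos g g0] with x e p
    show (0 : X → ℝ) x ≤ (Tfun' g) x
    rw [Pi.zero_apply, e]
    exact p
  · intro h hb
    have hb1 : ⇑h ≤ᵐ[μS] fun _ => (1:ℝ) := hb.mono fun x hx => hx.2
    filter_upwards [hT_coe h, hTle1 h hb1] with r e p
    show (Tfun h) r ≤ 1
    rw [e]
    exact p
  · intro g gb
    have gb1 : ⇑g ≤ᵐ[ν] fun _ => (1:ℝ) := gb.mono fun r hr => hr.2
    filter_upwards [hT'_coe g, hT'le1 g gb1] with x e p
    show (Tfun' g) x ≤ 1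
    rw [e]
    exact p
  · intro h _
    exact hTint_eq h
  · intro g _
    exact hT'int_eq g
  · intro h g _ g0 g1
    exact hdual h g g0 g1
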